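/- arXiv:1303.5307 — 3 statements merged into one kernel-verified Lean document; each statement's English description precedes it below -/
import Mathlib

section
/- Let γ ∈ (−1, 0) and set c(γ) = ∫₀^∞ ξ^γ (1/ξ − 1/(e^ξ − 1)) dξ. Then for all real b > 0 and k > 0, the function x ↦ x^γ (1/(e^{bx} − 1) − k/(e^{kbx} − 1)) is Lebesgue integrable on (0, ∞) and ∫₀^∞ x^γ (1/(e^{bx} − 1) − k/(e^{kbx} − 1)) dx = b^{−(γ+1)} · c(γ) · (k^{−γ} − 1). -/
open MeasureTheory Set Real

noncomputable def gfun (ξ : ℝ) : ℝ := 1 / ξ - 1 / (Real.exp ξ - 1)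

lemma lt_exp_sub_one {ξ : ℝ} (hξ : 0 < ξ) : ξ < Real.exp ξ - 1 := by
  have := Real.add_one_lt_exp (ne_of_gt hξ); linarith

lemma gfun_nonneg {ξ : ℝ} (hξ : 0 < ξ) : 0 ≤ gfun ξ := by
  have h := lt_exp_sub_one hξ
  have h1 : (0:ℝ) < Real.exp ξ - 1 := lt_trans hξ h
  have : 1 / (Real.exp ξ - 1) ≤ 1 / ξ := one_div_le_one_div_of_le hξ h.le
  simpa [gfun] using this

lemma gfun_le_one {ξ : ℝ} (hξ : 0 < ξ) : gfun ξ ≤ 1 := by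
  have h := lt_exp_sub_one hξ
  have h1 : (0:ℝ) < Real.exp ξ - 1 := lt_trans hξ h
  have h2 : 1 - ξ ≤ Real.exp (-ξ) := by
    have := Real.add_one_le_exp (-ξ); linarith
  have h3 : Real.exp ξ * Real.exp (-ξ) = 1 := by
    rw [← Real.exp_add]; simp
  have h4 : Real.exp ξ * (1 - ξ) ≤ 1 := by
    nlinarith [mul_le_mul_of_nonneg_left h2 (Real.exp_pos ξ).le]
  rw [gfun, div_sub_div _ _ hξ.ne' h1.ne', div_le_one (by positivity)]
  nlinarith

lemma gfun_le_inv {ξ : ℝ} (hξ : 0 < ξ) : gfun ξ ≤ 1 / ξ := by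
  have h1 : (0:ℝ) < Real.exp ξ - 1 := lt_trans hξ (lt_exp_sub_one hξ)
  have : 0 ≤ 1 / (Real.exp ξ - 1) := by positivity
  simp only [gfun]; linarith

lemma gfun_contOn : ContinuousOn gfun (Ioi (0:ℝ)) := by
  apply ContinuousOn.sub
  · exact continuousOn_const.div continuousOn_id fun x hx => (mem_Ioi.mp hx).ne'
  · exact continuousOn_const.div (Real.continuous_exp.continuousOn.sub continuousOn_const)
      fun x hx => (lt_trans (mem_Ioi.mp hx) (lt_exp_sub_one (mem_Ioi.mp hx))).ne'

lemma hfun_contOn (γ : ℝ) : ContinuousOn (fun ξ => ξ ^ γ * gfun ξ) (Ioi (0:ℝ)) := by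
  apply ContinuousOn.mul _ gfun_contOn
  exact fun x hx => (Real.continuousAt_rpow_const x γ (Or.inl (mem_Ioi.mp hx).ne')).continuousWithinAt

lemma hfun_integrable (γ : ℝ) (hγ : γ ∈ Set.Ioo (-1 : ℝ) 0) :
    IntegrableOn (fun ξ => ξ ^ γ * gfun ξ) (Ioi (0:ℝ)) := by
  obtain ⟨hγ1, hγ0⟩ := hγ
  have hmeas : AEStronglyMeasurable (fun ξ => ξ ^ γ * gfun ξ) (volume.restrict (Ioi (0:ℝ))) :=
    (hfun_contOn γ).aestronglyMeasurable measurableSet_Ioi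
  have hsplit : Ioc (0:ℝ) 1 ∪ Ioi 1 = Ioi 0 := Set.Ioc_union_Ioi_eq_Ioi zero_le_one
  rw [← hsplit]
  apply IntegrableOn.union
  · -- on Ioc 0 1, bound by ξ ^ γ
    have hbound : IntegrableOn (fun ξ : ℝ => ξ ^ γ) (Ioc (0:ℝ) 1) := by
      rw [integrableOn_Ioc_iff_integrableOn_Ioo]
      exact (intervalIntegral.integrableOn_Ioo_rpow_iff zero_lt_one).mpr hγ1
    apply Integrable.mono' hbound (hmeas.mono_set Ioc_subset_Ioi_self)
    · filter_upwards [ae_restrict_mem measurableSet_Ioc] with ξ hξ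
      have hξ0 : 0 < ξ := hξ.1
      have hg0 := gfun_nonneg hξ0
      have hg1 := gfun_le_one hξ0
      rw [Real.norm_eq_abs, abs_of_nonneg (by positivity)]
      calc ξ ^ γ * gfun ξ ≤ ξ ^ γ * 1 := by
            apply mul_le_mul_of_nonneg_left hg1 (by positivity)
        _ = ξ ^ γ := mul_one _
  · -- on Ioi 1, bound by ξ ^ (γ - 1)
    have hbound : IntegrableOn (fun ξ : ℝ => ξ ^ (γ - 1)) (Ioi (1:ℝ)) :=
      (integrableOn_Ioi_rpow_iff zero_lt_one).mpr (by linarith)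
    apply Integrable.mono' hbound (hmeas.mono_set (Ioi_subset_Ioi zero_le_one))
    · filter_upwards [ae_restrict_mem measurableSet_Ioi] with ξ hξ
      have hξ0 : (0:ℝ) < ξ := lt_trans zero_lt_one hξ
      have hg0 := gfun_nonneg hξ0
      rw [Real.norm_eq_abs, abs_of_nonneg (by positivity)]
      calc ξ ^ γ * gfun ξ ≤ ξ ^ γ * (1/ξ) :=
            mul_le_mul_of_nonneg_left (gfun_le_inv hξ0) (by positivity)
        _ = ξ ^ (γ - 1) := by
            rw [one_div, Real.rpow_sub hξ0, Real.rpow_one]; ring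

lemma scaled_integrable (γ : ℝ) (hγ : γ ∈ Set.Ioo (-1 : ℝ) 0) {a : ℝ} (ha : 0 < a) :
    IntegrableOn (fun x => x ^ γ * gfun (a * x)) (Ioi (0:ℝ)) := by
  have h1 : IntegrableOn (fun x : ℝ => (a * x) ^ γ * gfun (a * x)) (Ioi (0:ℝ)) := by
    rw [integrableOn_Ioi_comp_mul_left_iff (fun ξ => ξ ^ γ * gfun ξ) 0 ha, mul_zero]
    exact hfun_integrable γ hγ
  have h2 : IntegrableOn (fun x : ℝ => (a ^ γ)⁻¹ * ((a * x) ^ γ * gfun (a * x))) (Ioi (0:ℝ)) :=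
    h1.const_mul (a ^ γ)⁻¹
  apply IntegrableOn.congr_fun h2 _ measurableSet_Ioi
  intro x hx
  have hx0 : (0:ℝ) < x := hx
  show (a ^ γ)⁻¹ * ((a * x) ^ γ * gfun (a * x)) = x ^ γ * gfun (a * x)
  rw [Real.mul_rpow ha.le hx0.le]
  field_simp [(Real.rpow_pos_of_pos ha γ).ne']

lemma scaled_integral (γ : ℝ) (hγ : γ ∈ Set.Ioo (-1 : ℝ) 0) {a : ℝ} (ha : 0 < a) :
    ∫ x in Ioi (0:ℝ), x ^ γ * gfun (a * x) =
      a ^ (-(γ + 1)) * ∫ ξ in Ioi (0:ℝ), ξ ^ γ * gfun ξ := by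
  have hcong : ∫ x in Ioi (0:ℝ), x ^ γ * gfun (a * x) =
      ∫ x in Ioi (0:ℝ), (a ^ γ)⁻¹ * ((a * x) ^ γ * gfun (a * x)) := by
    apply setIntegral_congr_fun measurableSet_Ioi
    intro x hx
    have hx0 : (0:ℝ) < x := hx
    show x ^ γ * gfun (a * x) = (a ^ γ)⁻¹ * ((a * x) ^ γ * gfun (a * x))
    rw [Real.mul_rpow ha.le hx0.le]
    field_simp [(Real.rpow_pos_of_pos ha γ).ne']
  rw [hcong, integral_const_mul,
    integral_comp_mul_left_Ioi (fun ξ => ξ ^ γ * gfun ξ) 0 ha, mul_zero]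
  simp only [smul_eq_mul]
  rw [← mul_assoc]
  congr 1
  rw [Real.rpow_neg ha.le, Real.rpow_add ha, Real.rpow_one, mul_inv]

/-- For `γ ∈ (−1, 0)`, `b > 0`, `k > 0`, the function
`x ↦ x^γ (1/(e^{bx} − 1) − k/(e^{kbx} − 1))` is Lebesgue integrable on `(0, ∞)` and
its integral equals `b^{−(γ+1)} c(γ) (k^{−γ} − 1)`, where
`c(γ) = ∫₀^∞ ξ^γ (1/ξ − 1/(e^ξ − 1)) dξ`. -/
theorem integral_rpow_bose_difference (γ : ℝ) (hγ : γ ∈ Set.Ioo (-1 : ℝ) 0)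
    (b k : ℝ) (hb : 0 < b) (hk : 0 < k) :
    IntegrableOn
      (fun x : ℝ => x ^ γ *
        (1 / (Real.exp (b * x) - 1) - k / (Real.exp (k * b * x) - 1)))
      (Ioi 0) ∧
    ∫ x in Ioi (0 : ℝ),
        x ^ γ * (1 / (Real.exp (b * x) - 1) - k / (Real.exp (k * b * x) - 1)) =
      b ^ (-(γ + 1)) *
        (∫ ξ in Ioi (0 : ℝ), ξ ^ γ * (1 / ξ - 1 / (Real.exp ξ - 1))) *
        (k ^ (-γ) - 1) := by
  have hkb : 0 < k * b := mul_pos hk hb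
  have key : ∀ x ∈ Ioi (0:ℝ),
      x ^ γ * (1 / (Real.exp (b * x) - 1) - k / (Real.exp (k * b * x) - 1)) =
      k * (x ^ γ * gfun (k * b * x)) - x ^ γ * gfun (b * x) := by
    intro x hx
    have hx0 : (0:ℝ) < x := hx
    have hb1 : (0:ℝ) < Real.exp (b * x) - 1 :=
      lt_trans (mul_pos hb hx0) (lt_exp_sub_one (mul_pos hb hx0))
    have hk1 : (0:ℝ) < Real.exp (k * b * x) - 1 :=
      lt_trans (mul_pos hkb hx0) (lt_exp_sub_one (mul_pos hkb hx0))
    simp only [gfun]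
    field_simp
    ring
  have hIk := scaled_integrable γ hγ hkb
  have hIb := scaled_integrable γ hγ hb
  have hInt : IntegrableOn
      (fun x : ℝ => x ^ γ *
        (1 / (Real.exp (b * x) - 1) - k / (Real.exp (k * b * x) - 1))) (Ioi 0) := by
    apply IntegrableOn.congr_fun _ (fun x hx => (key x hx).symm) measurableSet_Ioi
    exact (hIk.const_mul k).sub hIb
  refine ⟨hInt, ?_⟩
  have heq : ∫ x in Ioi (0:ℝ),
      x ^ γ * (1 / (Real.exp (b * x) - 1) - k / (Real.exp (k * b * x) - 1)) =
      ∫ x in Ioi (0:ℝ), (k * (x ^ γ * gfun (k * b * x)) - x ^ γ * gfun (b * x)) :=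
    setIntegral_congr_fun measurableSet_Ioi key
  rw [heq, integral_sub (hIk.const_mul k) hIb, integral_const_mul,
    scaled_integral γ hγ hkb, scaled_integral γ hγ hb]
  have hc : ∫ ξ in Ioi (0:ℝ), ξ ^ γ * gfun ξ =
      ∫ ξ in Ioi (0:ℝ), ξ ^ γ * (1 / ξ - 1 / (Real.exp ξ - 1)) := rfl
  rw [hc]
  have hkb_pow : (k * b) ^ (-(γ + 1)) = k ^ (-(γ + 1)) * b ^ (-(γ + 1)) :=
    Real.mul_rpow hk.le hb.le
  have hkk : k * k ^ (-(γ + 1)) = k ^ (-γ) := by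
    calc k * k ^ (-(γ + 1)) = k ^ (1:ℝ) * k ^ (-(γ + 1)) := by rw [Real.rpow_one]
      _ = k ^ (1 + -(γ + 1)) := (Real.rpow_add hk _ _).symm
      _ = k ^ (-γ) := by ring_nf
  rw [hkb_pow, ← hkk]
  ring
end

section
/- Let ψ : ℝ → ℝ be continuously differentiable with ∫_{−∞}^{∞} ψ(x)² dx = 1, and suppose that the functions x²ψ(x)² and ψ′(x)² are Lebesgue integrable on ℝ and that x·ψ(x)² → 0 as x → ±∞. Then (∫_{−∞}^{∞} x² ψ(x)² dx) · (∫_{−∞}^{∞} ψ′(x)² dx) ≥ 1/4. Equivalently, for any ε > 0, writing (Δx)² = ∫ x²ψ² dx and |ΔD|² = ε² ∫ (ψ′)² dx, one has √((Δx)² · |ΔD|²) ≥ ε/2. -/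
open MeasureTheory Filter Real

/-- Uncertainty principle: if `ψ` is `C¹` with `∫ ψ² = 1`, `x²ψ²` and `(ψ′)²` integrable,
and `x ψ(x)² → 0` as `x → ±∞`, then `(∫ x²ψ²)(∫ (ψ′)²) ≥ 1/4`; equivalently, for any
`ε > 0`, `√((Δx)² |ΔD|²) ≥ ε/2` with `(Δx)² = ∫ x²ψ²` and `|ΔD|² = ε² ∫ (ψ′)²`. -/
theorem uncertainty_principle (ψ : ℝ → ℝ) (hψ : ContDiff ℝ 1 ψ)
    (hnorm : ∫ x : ℝ, ψ x ^ 2 = 1)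
    (hx2 : Integrable fun x : ℝ => x ^ 2 * ψ x ^ 2)
    (hd : Integrable fun x : ℝ => (deriv ψ x) ^ 2)
    (htop : Tendsto (fun x : ℝ => x * ψ x ^ 2) atTop (nhds 0))
    (hbot : Tendsto (fun x : ℝ => x * ψ x ^ 2) atBot (nhds 0)) :
    (∫ x : ℝ, x ^ 2 * ψ x ^ 2) * (∫ x : ℝ, (deriv ψ x) ^ 2) ≥ 1 / 4 ∧
    ∀ ε : ℝ, 0 < ε →
      Real.sqrt ((∫ x : ℝ, x ^ 2 * ψ x ^ 2) * (ε ^ 2 * ∫ x : ℝ, (deriv ψ x) ^ 2)) ≥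
        ε / 2 := by
  have hψc : Continuous ψ := hψ.continuous
  have hdc : Continuous (deriv ψ) := hψ.continuous_deriv le_rfl
  have hψ2 : Integrable fun x : ℝ => ψ x ^ 2 := by
    by_contra h
    rw [integral_undef h] at hnorm; norm_num at hnorm
  set A := ∫ x : ℝ, x ^ 2 * ψ x ^ 2 with hA
  set B := ∫ x : ℝ, (deriv ψ x) ^ 2 with hB
  have hxm : AEStronglyMeasurable (fun x : ℝ => x * (ψ x * deriv ψ x)) volume :=
    (continuous_id.mul (hψc.mul hdc)).aestronglyMeasurable
  have hI : Integrable fun x : ℝ => x * (ψ x * deriv ψ x) := by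
    refine (hx2.add hd).mono' hxm ?_
    filter_upwards with x
    have h1 : 0 ≤ x ^ 2 * ψ x ^ 2 := by positivity
    have h2 : 0 ≤ (deriv ψ x) ^ 2 := sq_nonneg _
    rw [Real.norm_eq_abs]
    simp only [Pi.add_apply]
    rcases abs_cases (x * (ψ x * deriv ψ x)) with ⟨he, _⟩ | ⟨he, _⟩ <;> rw [he] <;>
      nlinarith [sq_nonneg (x * ψ x - deriv ψ x), sq_nonneg (x * ψ x + deriv ψ x)]
  -- FTC: ∫ (ψ² + 2 x ψ ψ') = 0
  have hderiv : ∀ x : ℝ, HasDerivAt (fun x : ℝ => x * ψ x ^ 2)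
      (ψ x ^ 2 + 2 * (x * (ψ x * deriv ψ x))) x := by
    intro x
    have h1 : HasDerivAt ψ (deriv ψ x) x := (hψ.differentiable one_ne_zero x).hasDerivAt
    have : HasDerivAt (fun x : ℝ => x * ψ x ^ 2) _ x := (hasDerivAt_id x).mul (h1.pow 2)
    convert this using 1
    push_cast
    simp only [id]
    ring
  have hint : Integrable fun x : ℝ => ψ x ^ 2 + 2 * (x * (ψ x * deriv ψ x)) :=
    hψ2.add (hI.const_mul 2)
  have hkey : ∫ x : ℝ, (ψ x ^ 2 + 2 * (x * (ψ x * deriv ψ x))) = 0 - 0 :=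
    integral_of_hasDerivAt_of_tendsto hderiv hint hbot htop
  rw [integral_add hψ2 (hI.const_mul 2), integral_const_mul, hnorm] at hkey
  have hIval : ∫ x : ℝ, x * (ψ x * deriv ψ x) = -(1/2) := by linarith
  -- quadratic nonnegativity
  have hq : ∀ a : ℝ, 0 ≤ a ^ 2 * A - a + B := by
    intro a
    have h0 : 0 ≤ ∫ x : ℝ, (a * x * ψ x + deriv ψ x) ^ 2 :=
      integral_nonneg fun x => sq_nonneg _
    have hfe : (fun x : ℝ => (a * x * ψ x + deriv ψ x) ^ 2) =
        fun x : ℝ => a ^ 2 * (x ^ 2 * ψ x ^ 2) +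
          ((2 * a) * (x * (ψ x * deriv ψ x)) + (deriv ψ x) ^ 2) := by
      funext x; ring
    have i1 : Integrable (fun x : ℝ => a ^ 2 * (x ^ 2 * ψ x ^ 2)) := hx2.const_mul _
    have i2 : Integrable (fun x : ℝ => (2 * a) * (x * (ψ x * deriv ψ x))) := hI.const_mul _
    have i3 : Integrable (fun x : ℝ => (2 * a) * (x * (ψ x * deriv ψ x)) + (deriv ψ x) ^ 2) :=
      i2.add hd
    rw [hfe, integral_add i1 i3, integral_add i2 hd, integral_const_mul, integral_const_mul,
      hIval] at h0
    rw [hA, hB]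
    linarith
  have hA0 : 0 ≤ A := integral_nonneg fun x => by positivity
  have hApos : 0 < A := by
    rcases hA0.lt_or_eq with h | h
    · exact h
    · exfalso
      have := hq (B + 1)
      nlinarith [hq (B + 1)]
  have hmain : A * B ≥ 1 / 4 := by
    have := hq (1 / (2 * A))
    have h1 : (1 / (2 * A)) ^ 2 * A = 1 / (4 * A) := by
      field_simp; ring
    rw [h1] at this
    have h2 : 1 / (4 * A) - 1 / (2 * A) = -(1 / (4 * A)) := by
      field_simp; ring
    have h3 : 1 / (4 * A) ≤ B := by linarith
    calc 1 / 4 = A * (1 / (4 * A)) := by field_simp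
    _ ≤ A * B := by exact mul_le_mul_of_nonneg_left h3 hA0
  refine ⟨hmain, fun ε hε => ?_⟩
  have hB0 : 0 ≤ B := integral_nonneg fun x => sq_nonneg _
  have h4 : (ε / 2) ^ 2 ≤ A * (ε ^ 2 * B) := by nlinarith
  calc ε / 2 = Real.sqrt ((ε / 2) ^ 2) := by
        rw [Real.sqrt_sq (by positivity)]
  _ ≤ Real.sqrt (A * (ε ^ 2 * B)) := Real.sqrt_le_sqrt h4
end

section
/- For every real s > 0 and every x with 0 < x < 1, the function t ↦ t^{s−1}/(x^{−1} e^t − 1) is Lebesgue integrable on (0, ∞) and ∫₀^∞ t^{s−1}/(x^{−1} e^t − 1) dt = Γ(s) · ∑_{n=1}^∞ x^n / n^s, where the series on the right converges absolutely. -/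
open MeasureTheory Set Real

lemma polylog_den_pos {x t : ℝ} (hx0 : 0 < x) (hx1 : x < 1) (ht : 0 < t) :
    0 < x⁻¹ * Real.exp t - 1 := by
  have h1 : 1 < x⁻¹ := (one_lt_inv₀ hx0).mpr hx1
  have h2 : 1 < Real.exp t := by nlinarith [Real.add_one_le_exp t]
  nlinarith

lemma polylog_tsum_eq {x t : ℝ} (hx0 : 0 < x) (hx1 : x < 1) (ht : 0 < t) (s : ℝ) :
    ∑' n : ℕ, x ^ (n + 1) * (t ^ (s - 1) * Real.exp (-(((n : ℝ) + 1) * t))) =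
      t ^ (s - 1) / (x⁻¹ * Real.exp t - 1) := by
  set y : ℝ := x * Real.exp (-t) with hy
  have hy0 : 0 < y := by positivity
  have hy1 : y < 1 := by
    have := Real.exp_lt_one_iff.mpr (neg_lt_zero.mpr ht)
    nlinarith
  have hterm : ∀ n : ℕ, x ^ (n + 1) * (t ^ (s - 1) * Real.exp (-(((n : ℝ) + 1) * t))) =
      t ^ (s - 1) * (y * y ^ n) := by
    intro n
    have : Real.exp (-(((n : ℝ) + 1) * t)) = Real.exp (-t) ^ (n + 1) := by
      rw [← Real.exp_nat_mul]
      push_cast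
      ring_nf
    rw [this, hy]
    ring
  simp_rw [hterm]
  rw [tsum_mul_left, tsum_mul_left, tsum_geometric_of_lt_one hy0.le hy1]
  have hden := polylog_den_pos hx0 hx1 ht
  have h1y : 0 < 1 - y := by linarith
  have h1 : y * (x⁻¹ * Real.exp t) = 1 := by
    rw [hy, Real.exp_neg]
    field_simp
  have key : y / (1 - y) = 1 / (x⁻¹ * Real.exp t - 1) := by
    rw [div_eq_div_iff (ne_of_gt h1y) (ne_of_gt hden)]
    nlinarith
  rw [← div_eq_mul_inv, key, mul_one_div]

/-- Bose-type integral representation of the polylogarithm: for `s > 0` and `0 < x < 1`,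
`t ↦ t^{s−1}/(x⁻¹ e^t − 1)` is Lebesgue integrable on `(0, ∞)` and
`∫₀^∞ t^{s−1}/(x⁻¹ e^t − 1) dt = Γ(s) ∑_{n≥1} xⁿ/n^s`, the series converging
absolutely. -/
theorem integral_polylog_repr (s x : ℝ) (hs : 0 < s) (hx0 : 0 < x) (hx1 : x < 1) :
    IntegrableOn (fun t : ℝ => t ^ (s - 1) / (x⁻¹ * Real.exp t - 1)) (Ioi 0) ∧
    Summable (fun n : ℕ => |x ^ (n + 1) / ((n : ℝ) + 1) ^ s|) ∧
    ∫ t in Ioi (0 : ℝ), t ^ (s - 1) / (x⁻¹ * Real.exp t - 1) =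
      Real.Gamma s * ∑' n : ℕ, x ^ (n + 1) / ((n : ℝ) + 1) ^ s := by
  have hgamma := Real.GammaIntegral_convergent hs
  -- integrability of the main function
  have hmeas : Measurable (fun t : ℝ => t ^ (s - 1) / (x⁻¹ * Real.exp t - 1)) := by
    fun_prop
  have hint : IntegrableOn (fun t : ℝ => t ^ (s - 1) / (x⁻¹ * Real.exp t - 1)) (Ioi 0) := by
    refine Integrable.mono' ((hgamma.const_mul (x / (1 - x)))) hmeas.aestronglyMeasurable ?_
    filter_upwards [ae_restrict_mem measurableSet_Ioi] with t (ht : 0 < t)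
    have hden := polylog_den_pos hx0 hx1 ht
    have htp : (0:ℝ) ≤ t ^ (s - 1) := Real.rpow_nonneg ht.le _
    have h2 : 1 ≤ Real.exp t := by nlinarith [Real.add_one_le_exp t]
    have hb : ((1 - x) / x) * Real.exp t ≤ x⁻¹ * Real.exp t - 1 := by
      rw [div_mul_eq_mul_div, div_le_iff₀ hx0]
      have hxx : x⁻¹ * x = 1 := inv_mul_cancel₀ (ne_of_gt hx0)
      nlinarith [Real.exp_pos t]
    have h1x : (0:ℝ) < 1 - x := by linarith
    have hbpos : 0 < ((1 - x) / x) * Real.exp t := by positivity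
    have hle : 1 / (x⁻¹ * Real.exp t - 1) ≤ (x / (1 - x)) * Real.exp (-t) := by
      calc 1 / (x⁻¹ * Real.exp t - 1) ≤ 1 / (((1 - x) / x) * Real.exp t) :=
            one_div_le_one_div_of_le hbpos hb
        _ = (x / (1 - x)) * Real.exp (-t) := by
            rw [Real.exp_neg]
            field_simp
    have hnn : 0 ≤ t ^ (s - 1) / (x⁻¹ * Real.exp t - 1) := by positivity
    rw [Real.norm_eq_abs, abs_of_nonneg hnn]
    calc t ^ (s - 1) / (x⁻¹ * Real.exp t - 1) = t ^ (s - 1) * (1 / (x⁻¹ * Real.exp t - 1)) := by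
          ring
      _ ≤ t ^ (s - 1) * ((x / (1 - x)) * Real.exp (-t)) :=
          mul_le_mul_of_nonneg_left hle htp
      _ = x / (1 - x) * (Real.exp (-t) * t ^ (s - 1)) := by ring
  -- summability of |x^(n+1)/(n+1)^s|
  have hsummand : ∀ n : ℕ, |x ^ (n + 1) / ((n : ℝ) + 1) ^ s| ≤ x * x ^ n := by
    intro n
    have hn1 : (1:ℝ) ≤ ((n : ℝ) + 1) := by have := Nat.cast_nonneg (α := ℝ) n; linarith
    have hns : (1:ℝ) ≤ ((n : ℝ) + 1) ^ s := Real.one_le_rpow hn1 hs.le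
    have hnn : (0:ℝ) ≤ x ^ (n + 1) / ((n : ℝ) + 1) ^ s := by positivity
    rw [abs_of_nonneg hnn, pow_succ, mul_comm (x ^ n) x]
    exact div_le_self (by positivity) hns
  have hsum : Summable (fun n : ℕ => |x ^ (n + 1) / ((n : ℝ) + 1) ^ s|) :=
    Summable.of_nonneg_of_le (fun n => abs_nonneg _) hsummand
      ((summable_geometric_of_lt_one hx0.le hx1).mul_left x)
  refine ⟨hint, hsum, ?_⟩
  -- the integral computation
  set F : ℕ → ℝ → ℝ := fun n t => x ^ (n + 1) * (t ^ (s - 1) * Real.exp (-(((n : ℝ) + 1) * t)))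
    with hF
  have hFint : ∀ n, IntegrableOn (F n) (Ioi 0) := by
    intro n
    refine Integrable.const_mul ?_ _
    have hm : Measurable (fun t : ℝ => t ^ (s - 1) * Real.exp (-(((n : ℝ) + 1) * t))) := by
      fun_prop
    refine Integrable.mono' hgamma hm.aestronglyMeasurable ?_
    filter_upwards [ae_restrict_mem measurableSet_Ioi] with t (ht : 0 < t)
    have htp : (0:ℝ) ≤ t ^ (s - 1) := Real.rpow_nonneg ht.le _
    rw [Real.norm_eq_abs, abs_of_nonneg (by positivity)]
    have hee : Real.exp (-(((n : ℝ) + 1) * t)) ≤ Real.exp (-t) := by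
      apply Real.exp_le_exp.mpr
      nlinarith [Nat.cast_nonneg (α := ℝ) n]
    nlinarith [Real.exp_pos (-(((n : ℝ) + 1) * t))]
  have hFval : ∀ n : ℕ, (∫ t in Ioi (0:ℝ), F n t)
      = Real.Gamma s * (x ^ (n + 1) / ((n : ℝ) + 1) ^ s) := by
    intro n
    have hn : (0:ℝ) < (n : ℝ) + 1 := by positivity
    simp only [hF]
    rw [integral_const_mul, Real.integral_rpow_mul_exp_neg_mul_Ioi hs hn,
      one_div, Real.inv_rpow hn.le]
    have hns : (0:ℝ) < ((n : ℝ) + 1) ^ s := Real.rpow_pos_of_pos hn s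
    field_simp
  have hFnormval : ∀ n : ℕ, (∫ t in Ioi (0:ℝ), ‖F n t‖)
      = Real.Gamma s * (x ^ (n + 1) / ((n : ℝ) + 1) ^ s) := by
    intro n
    rw [← hFval n]
    refine setIntegral_congr_fun measurableSet_Ioi (fun t ht => ?_)
    have ht' : (0:ℝ) < t := ht
    have htp : (0:ℝ) ≤ t ^ (s - 1) := Real.rpow_nonneg ht'.le _
    simp only [hF]
    rw [Real.norm_eq_abs, abs_of_nonneg (by positivity)]
  have hFsum : Summable (fun n => ∫ t in Ioi (0:ℝ), ‖F n t‖) := by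
    simp_rw [hFnormval]
    refine Summable.mul_left _ ?_
    refine hsum.congr (fun n => ?_)
    have hn1 : (1:ℝ) ≤ ((n : ℝ) + 1) := by have := Nat.cast_nonneg (α := ℝ) n; linarith
    have hnn : (0:ℝ) ≤ x ^ (n + 1) / ((n : ℝ) + 1) ^ s := by positivity
    rw [abs_of_nonneg hnn]
  have key := integral_tsum_of_summable_integral_norm hFint hFsum
  have heq : (∫ t in Ioi (0:ℝ), (∑' n, F n t))
      = ∫ t in Ioi (0:ℝ), t ^ (s - 1) / (x⁻¹ * Real.exp t - 1) := by
    refine setIntegral_congr_fun measurableSet_Ioi (fun t ht => ?_)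
    exact polylog_tsum_eq hx0 hx1 ht s
  rw [heq] at key
  rw [← key]
  simp_rw [hFval]
  rw [tsum_mul_left]
end
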